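/- Let n ≥ 2 and let r be the unique real root with r > 1 of the polynomial χ_n(λ) = λ^n - λ^{n-1} - ... - λ - 1. Then for every natural number k, the k-th n-bonacci number F_k^{(n)} is the nearest integer to ((r-1)/((n+1)r - 2n)) · r^{k-n+1}; that is, |F_k^{(n)} - ((r-1)/((n+1)r - 2n)) · r^{k-n+1}| < 1/2, where r^{k-n+1} is the integer power (possibly with negative exponent) of r. -/

import Mathlib

private lemma nb_aux1 : ∀ m : ℕ, m + 4 ≤ 2 ^ (m + 2) := by
  intro m
  induction m with
  | zero => norm_num
  | succ k ih =>
    have h1 : (1:ℕ) ≤ 2 ^ (k + 2) := Nat.one_le_two_pow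
    calc k + 1 + 4 = (k + 4) + 1 := by ring
    _ ≤ 2 ^ (k + 2) + 2 ^ (k + 2) := by omega
    _ = 2 ^ (k + 3) := by ring

private lemma nb_aux2 : ∀ m : ℕ, 3 * m + 7 ≤ 2 ^ (m + 3) := by
  intro m
  induction m with
  | zero => norm_num
  | succ k ih =>
    have h1 : (3:ℕ) ≤ 2 ^ (k + 3) := by
      calc (3:ℕ) ≤ 2 ^ 2 := by norm_num
      _ ≤ 2 ^ (k + 3) := Nat.pow_le_pow_right (by norm_num) (by omega)
    calc 3 * (k + 1) + 7 = (3 * k + 7) + 3 := by ring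
    _ ≤ 2 ^ (k + 3) + 2 ^ (k + 3) := by omega
    _ = 2 ^ (k + 4) := by ring

/-- Du–Dresden: the `k`-th `n`-bonacci number is the nearest integer to
`((r - 1) / ((n + 1) r - 2 n)) · r ^ (k - n + 1)`, where `r > 1` is the unique
real root of `χₙ(λ) = λ^n - λ^(n-1) - ⋯ - λ - 1` with `r > 1` and the exponent
is an integer power. -/
theorem nbonacci_nearest_integer (n : ℕ) (hn : 2 ≤ n) (F : ℕ → ℕ)
    (hF0 : ∀ k < n - 1, F k = 0) (hF1 : F (n - 1) = 1)
    (hFrec : ∀ k : ℕ, F (k + n) = ∑ i ∈ Finset.range n, F (k + i))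
    (r : ℝ) (hr : 1 < r)
    (hroot : r ^ n - ∑ i ∈ Finset.range n, r ^ i = 0) :
    ∀ k : ℕ,
      |(F k : ℝ) - ((r - 1) / ((n + 1) * r - 2 * n)) * r ^ ((k : ℤ) - n + 1)| < 1 / 2 := by
  have hr0 : (0:ℝ) < r := by linarith
  have hrne : r ≠ 0 := ne_of_gt hr0
  have hr1 : (0:ℝ) < r - 1 := by linarith
  have hr1' : (1:ℝ) ≤ r := le_of_lt hr
  have hs : ∑ i ∈ Finset.range n, r ^ i = r ^ n := by linarith
  have hrn_pos : (0:ℝ) < r ^ n := pow_pos hr0 n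
  have hnR : (2:ℝ) ≤ (n:ℝ) := by exact_mod_cast hn
  have hn0 : (0:ℝ) < (n:ℝ) := by linarith
  have hnne : (n:ℝ) ≠ 0 := ne_of_gt hn0
  -- the key polynomial identity : r^(n+1) = 2 r^n - 1
  have hK : r * r ^ n = 2 * r ^ n - 1 := by
    have h := geom_sum_mul r n
    rw [hs] at h
    linear_combination h
  have hprod : r ^ n * (2 - r) = 1 := by linear_combination -hK
  have hr2 : r < 2 := by
    by_contra hcon
    push_neg at hcon
    have h1 : r ^ n * (2 - r) ≤ 0 :=
      mul_nonpos_of_nonneg_of_nonpos hrn_pos.le (by linarith)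
    linarith [hprod]
  have ht : (0:ℝ) < 2 - r := by linarith
  -- r^n > n
  have hrn_gt : (n:ℝ) < r ^ n := by
    have h1 : ∀ i ∈ Finset.range n, (1:ℝ) ≤ r ^ i := fun i _ => one_le_pow₀ hr1'
    have h2 : ∑ _i ∈ Finset.range n, (1:ℝ) < ∑ i ∈ Finset.range n, r ^ i :=
      Finset.sum_lt_sum h1 ⟨1, Finset.mem_range.2 (by omega), by simpa using hr⟩
    rw [hs] at h2
    simpa using h2
  -- r > 2 - 1/n
  have hrlow : 2 - 1 / (n:ℝ) < r := by
    have h0 : (2 - r) * (n:ℝ) < 1 := by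
      have ha := mul_lt_mul_of_pos_left hrn_gt ht
      have hb2 : (2 - r) * r ^ n = 1 := by linear_combination hprod
      linarith
    have h1 : 2 - r < 1 / (n:ℝ) := by rw [lt_div_iff₀ hn0]; linarith
    linarith
  -- Bernoulli : (1 - 1/(2n))^n ≥ 1/2
  have hhalf : (1:ℝ) / 2 ≤ (1 - 1 / (2 * (n:ℝ))) ^ n := by
    have hd1 : (0:ℝ) < 2 * (n:ℝ) := by linarith
    have hd2 : 1 / (2 * (n:ℝ)) ≤ 1 := by rw [div_le_one hd1]; linarith
    have hd3 : (0:ℝ) < 1 / (2 * (n:ℝ)) := by positivity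
    have hb := one_add_mul_le_pow (a := -(1 / (2 * (n:ℝ)))) (by linarith) n
    have e1 : 1 + (n:ℝ) * -(1 / (2 * (n:ℝ))) = 1 / 2 := by field_simp; ring
    have e2 : 1 + -(1 / (2 * (n:ℝ))) = 1 - 1 / (2 * (n:ℝ)) := by ring
    rw [e1, e2] at hb
    exact hb
  -- 2^n < 2 r^n
  have h2rn : (2:ℝ) ^ n < 2 * r ^ n := by
    have hpos2 : (0:ℝ) ≤ 2 - 1 / (n:ℝ) := by
      have h1 : 1 / (n:ℝ) ≤ 1 := by rw [div_le_one hn0]; linarith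
      linarith
    have h1 : (2 - 1 / (n:ℝ)) ^ n < r ^ n := pow_lt_pow_left₀ hrlow hpos2 (by omega)
    have h2 : (2 - 1 / (n:ℝ)) ^ n = 2 ^ n * (1 - 1 / (2 * (n:ℝ))) ^ n := by
      rw [← mul_pow]
      congr 1
      field_simp
    have h3 : (2:ℝ) ^ n * (1 / 2) ≤ 2 ^ n * (1 - 1 / (2 * (n:ℝ))) ^ n :=
      mul_le_mul_of_nonneg_left hhalf (by positivity)
    rw [← h2] at h3
    linarith [h1, h3]
  -- 2^n (2 - r) < 2
  have hkey : (2:ℝ) ^ n * (2 - r) < 2 := by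
    have ha := mul_lt_mul_of_pos_right h2rn ht
    have hb2 : (2 * r ^ n) * (2 - r) = 2 := by linear_combination 2 * hprod
    linarith
  -- positivity of the denominator
  have hcast1 : ((n:ℝ) + 1) ≤ 2 ^ n := by
    have h := Nat.succ_le_of_lt (Nat.lt_two_pow_self (n := n))
    exact_mod_cast h
  have hD : 0 < ((n:ℝ) + 1) * r - 2 * (n:ℝ) := by
    have h1 : ((n:ℝ) + 1) * (2 - r) ≤ 2 ^ n * (2 - r) := mul_le_mul_of_nonneg_right hcast1 ht.le
    have e : ((n:ℝ) + 1) * r - 2 * (n:ℝ) = 2 - ((n:ℝ) + 1) * (2 - r) := by ring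
    rw [e]
    linarith [h1, hkey]
  -- (n+1) < 2 r^(n-1)
  have hA : ((n:ℝ) + 1) < 2 * r ^ (n - 1) := by
    rcases Nat.lt_or_ge n 3 with h3 | h3
    · have hn2 : n = 2 := by omega
      subst hn2
      simp only [Finset.sum_range_succ, Finset.sum_range_zero, pow_zero, pow_one,
        zero_add] at hs
      norm_num
      by_contra hcon
      push_neg at hcon
      have h1 : r * r ≤ (3 / 2) * r := mul_le_mul_of_nonneg_right (by linarith) hr0.le
      have h2 : r ^ 2 = r * r := sq r
      linarith [hs, h1, hr2, h2]
    · obtain ⟨m, hm⟩ : ∃ m, n = m + 3 := ⟨n - 3, by omega⟩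
      have hnat : n + 1 ≤ 2 ^ (n - 1) := by
        calc n + 1 = m + 4 := by omega
        _ ≤ 2 ^ (m + 2) := nb_aux1 m
        _ = 2 ^ (n - 1) := by congr 1; omega
      have hcast : ((n:ℝ) + 1) ≤ 2 ^ (n - 1) := by exact_mod_cast hnat
      have hps : r ^ n = r ^ (n - 1) * r := by rw [← pow_succ]; congr 1; omega
      have hps2 : (2:ℝ) ^ n = 2 ^ (n - 1) * 2 := by rw [← pow_succ]; congr 1; omega
      have hrp : (0:ℝ) < r ^ (n - 1) := pow_pos hr0 _
      have h5 : r ^ (n - 1) * r < r ^ (n - 1) * 2 := mul_lt_mul_of_pos_left hr2 hrp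
      rw [hps] at h2rn
      rw [hps2] at h2rn
      linarith [h2rn, h5, hcast]
  -- (n+1) r (2-r) < 2
  have hprodm : r ^ (n - 1) * (r * (2 - r)) = 1 := by
    have hps : r ^ n = r ^ (n - 1) * r := by rw [← pow_succ]; congr 1; omega
    linear_combination hprod - (2 - r) * hps
  have hstep : ((n:ℝ) + 1) * (r * (2 - r)) < 2 := by
    have h02 : (0:ℝ) < r * (2 - r) := mul_pos hr0 ht
    calc ((n:ℝ) + 1) * (r * (2 - r)) < (2 * r ^ (n - 1)) * (r * (2 - r)) :=
          mul_lt_mul_of_pos_right hA h02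
    _ = 2 * (r ^ (n - 1) * (r * (2 - r))) := by ring
    _ = 2 := by rw [hprodm]; norm_num
  -- now define the constant and error sequence
  set c : ℝ := (r - 1) / (((n:ℝ) + 1) * r - 2 * (n:ℝ)) with hc_def
  have hc_pos : 0 < c := div_pos hr1 hD
  have h2c : 2 * c < r := by
    rw [hc_def]
    have e : 2 * ((r - 1) / (((n:ℝ) + 1) * r - 2 * (n:ℝ)))
        = (2 * (r - 1)) / (((n:ℝ) + 1) * r - 2 * (n:ℝ)) := by ring
    rw [e, div_lt_iff₀ hD]
    have e2 : r * (((n:ℝ) + 1) * r - 2 * (n:ℝ)) - 2 * (r - 1)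
        = 2 - ((n:ℝ) + 1) * (r * (2 - r)) := by ring
    linarith [hstep, e2.ge, e2.le]
  have hc_half : 1 / 2 < c := by
    rw [hc_def, lt_div_iff₀ hD]
    have h1 : (0:ℝ) < ((n:ℝ) - 1) * (2 - r) :=
      mul_pos (by linarith) ht
    have e2 : r - 1 - 1 / 2 * (((n:ℝ) + 1) * r - 2 * (n:ℝ)) = ((n:ℝ) - 1) * (2 - r) / 2 := by
      ring
    linarith [e2.ge, e2.le]
  have hc32 : c < 3 / 2 := by
    rw [hc_def, div_lt_iff₀ hD]
    have h2n1 : 3 * n + 1 ≤ 2 ^ (n + 1) := by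
      obtain ⟨m, hm⟩ : ∃ m, n = m + 2 := ⟨n - 2, by omega⟩
      calc 3 * n + 1 = 3 * m + 7 := by omega
      _ ≤ 2 ^ (m + 3) := nb_aux2 m
      _ = 2 ^ (n + 1) := by congr 1; omega
    have hcast2 : (3 * (n:ℝ) + 1) ≤ 2 ^ (n + 1) := by exact_mod_cast h2n1
    rw [pow_succ] at hcast2
    have h6 : (3 * (n:ℝ) + 1) * (2 - r) ≤ (2 ^ n * 2) * (2 - r) :=
      mul_le_mul_of_nonneg_right hcast2 ht.le
    have e2 : 3 / 2 * (((n:ℝ) + 1) * r - 2 * (n:ℝ)) - (r - 1)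
        = (4 - (3 * (n:ℝ) + 1) * (2 - r)) / 2 := by ring
    have e3 : (2 ^ n * 2) * (2 - r) = 2 * ((2:ℝ) ^ n * (2 - r)) := by ring
    linarith [hkey, e2.ge, e2.le, e3.ge, e3.le]
  -- the error sequence
  set E : ℕ → ℝ := fun k => (F k : ℝ) - c * r ^ ((k : ℤ) - (n:ℤ) + 1) with hE_def
  -- sum splitting helpers
  have hsplit : ∀ f : ℕ → ℝ, ∑ j ∈ Finset.range n, f j
      = (∑ j ∈ Finset.range (n - 1), f j) + f (n - 1) := by
    intro f
    obtain ⟨m, hm⟩ : ∃ m, n = m + 1 := ⟨n - 1, by omega⟩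
    rw [hm]
    simp only [Nat.add_sub_cancel]
    exact Finset.sum_range_succ f m
  have hshift : ∀ f : ℕ → ℝ, ∑ j ∈ Finset.range n, f j
      = (∑ j ∈ Finset.range (n - 1), f (j + 1)) + f 0 := by
    intro f
    obtain ⟨m, hm⟩ : ∃ m, n = m + 1 := ⟨n - 1, by omega⟩
    rw [hm]
    simp only [Nat.add_sub_cancel]
    exact Finset.sum_range_succ' f m
  -- the auxiliary coefficients
  set cc : ℕ → ℝ := fun j => (r ^ (n - j) - 2 * r ^ (n - 1 - j) + 1) / (r - 1) with hcc_def
  have hccn1 : cc (n - 1) = 1 := by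
    rw [hcc_def]
    simp only
    have e1 : n - (n - 1) = 1 := by omega
    have e2 : n - 1 - (n - 1) = 0 := by omega
    rw [e1, e2, pow_one, pow_zero]
    rw [show r - 2 * 1 + 1 = r - 1 by ring]
    exact div_self (ne_of_gt hr1)
  have hccrel : ∀ j, j < n - 1 → cc j = r * cc (j + 1) - 1 := by
    intro j hj
    have e1 : n - j = (n - j - 2) + 2 := by omega
    have e2 : n - 1 - j = (n - j - 2) + 1 := by omega
    have e3 : n - (j + 1) = (n - j - 2) + 1 := by omega
    have e4 : n - 1 - (j + 1) = n - j - 2 := by omega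
    rw [hcc_def]
    simp only
    rw [e1, e2, e3, e4]
    field_simp
    ring
  have hccr0 : r * cc 0 = 1 := by
    rw [hcc_def]
    simp only [Nat.sub_zero]
    have hp : r ^ n = r ^ (n - 1) * r := by rw [← pow_succ]; congr 1; omega
    rw [mul_div_assoc']
    rw [div_eq_one_iff_eq (ne_of_gt hr1)]
    linear_combination hK + 2 * hp
  have hccle : ∀ j, j < n → cc j ≤ 1 := by
    intro j hj
    obtain ⟨p, hp⟩ : ∃ p, n - j = p + 1 := ⟨n - j - 1, by omega⟩
    have e2 : n - 1 - j = p := by omega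
    rw [hcc_def]
    simp only
    rw [hp, e2, div_le_one hr1]
    have h1 : (1:ℝ) ≤ r ^ p := one_le_pow₀ hr1'
    have h2 : (0:ℝ) ≤ (2 - r) * (r ^ p - 1) :=
      mul_nonneg (by linarith) (by linarith)
    have e : r - 1 - (r ^ (p + 1) - 2 * r ^ p + 1) = (2 - r) * (r ^ p - 1) := by
      rw [pow_succ]; ring
    linarith [e.ge, e.le]
  have hScc : ∑ j ∈ Finset.range n, cc j = ((n:ℝ) - 1) / (r - 1) := by
    rw [hcc_def]
    simp only
    rw [← Finset.sum_div]
    congr 1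
    have h1 : ∑ j ∈ Finset.range n, r ^ (n - 1 - j) = r ^ n := by
      rw [Finset.sum_range_reflect (fun i => r ^ i) n, hs]
    have h2 : ∑ j ∈ Finset.range n, r ^ (n - j) = r * r ^ n := by
      have hper : ∀ j ∈ Finset.range n, r ^ (n - j) = r * r ^ (n - 1 - j) := by
        intro j hj
        have hj' : j < n := Finset.mem_range.mp hj
        have e : n - j = (n - 1 - j) + 1 := by omega
        rw [e, pow_succ]
        ring
      rw [Finset.sum_congr rfl hper, ← Finset.mul_sum, h1]
    calc ∑ j ∈ Finset.range n, (r ^ (n - j) - 2 * r ^ (n - 1 - j) + 1)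
        = (∑ j ∈ Finset.range n, (r ^ (n - j) - 2 * r ^ (n - 1 - j)))
          + ∑ _j ∈ Finset.range n, (1:ℝ) := Finset.sum_add_distrib
    _ = (∑ j ∈ Finset.range n, r ^ (n - j)) - (∑ j ∈ Finset.range n, 2 * r ^ (n - 1 - j))
          + (n:ℝ) := by rw [Finset.sum_sub_distrib]; simp
    _ = r * r ^ n - 2 * r ^ n + (n:ℝ) := by rw [h2, ← Finset.mul_sum, h1]
    _ = (n:ℝ) - 1 := by linear_combination hK
  -- the zpow recurrence
  have hzrec : ∀ l : ℕ, r ^ (((l + n : ℕ) : ℤ) - (n:ℤ) + 1)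
      = ∑ j ∈ Finset.range n, r ^ (((l + j : ℕ) : ℤ) - (n:ℤ) + 1) := by
    intro l
    have hper : ∀ j ∈ Finset.range n, r ^ (((l + j : ℕ) : ℤ) - (n:ℤ) + 1)
        = r ^ (((l:ℕ) : ℤ) - (n:ℤ) + 1) * r ^ j := by
      intro j hj
      rw [← zpow_natCast r j, ← zpow_add₀ hrne]
      congr 1
      push_cast
      ring
    rw [Finset.sum_congr rfl hper, ← Finset.mul_sum, hs, ← zpow_natCast r n, ← zpow_add₀ hrne]
    congr 1
    push_cast
    ring
  -- the E recurrence
  have hErec : ∀ l : ℕ, E (l + n) = ∑ j ∈ Finset.range n, E (l + j) := by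
    intro l
    simp only [hE_def]
    rw [Finset.sum_sub_distrib, hFrec l, Nat.cast_sum, hzrec l, Finset.mul_sum]
  -- the V invariant : base case
  have hVbase : ∑ j ∈ Finset.range n, cc j * E j = 0 := by
    have hterm1 : ∑ j ∈ Finset.range n, cc j * (F j : ℝ) = 1 := by
      rw [hsplit (fun j => cc j * (F j : ℝ))]
      have h0 : ∑ j ∈ Finset.range (n - 1), cc j * (F j : ℝ) = 0 := by
        apply Finset.sum_eq_zero
        intro j hj
        rw [hF0 j (Finset.mem_range.mp hj)]
        simp
      rw [h0, hF1, hccn1]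
      norm_num
    have hterm2 : ∑ j ∈ Finset.range n, cc j * r ^ ((j:ℤ) - (n:ℤ) + 1)
        = (((n:ℝ) + 1) * r - 2 * (n:ℝ)) / (r - 1) := by
      have hper : ∀ j ∈ Finset.range n, cc j * r ^ ((j:ℤ) - (n:ℤ) + 1)
          = (r - 2 + r ^ ((j:ℤ) - (n:ℤ) + 1)) / (r - 1) := by
        intro j hj
        have hj' : j < n := Finset.mem_range.mp hj
        have b1 : (r:ℝ) ^ (n - j) * r ^ ((j:ℤ) - (n:ℤ) + 1) = r := by
          rw [← zpow_natCast r (n - j), ← zpow_add₀ hrne]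
          have e : ((n - j : ℕ) : ℤ) + ((j:ℤ) - (n:ℤ) + 1) = 1 := by omega
          rw [e, zpow_one]
        have b2 : (r:ℝ) ^ (n - 1 - j) * r ^ ((j:ℤ) - (n:ℤ) + 1) = 1 := by
          rw [← zpow_natCast r (n - 1 - j), ← zpow_add₀ hrne]
          have e : ((n - 1 - j : ℕ) : ℤ) + ((j:ℤ) - (n:ℤ) + 1) = 0 := by omega
          rw [e, zpow_zero]
        rw [hcc_def]
        simp only
        rw [div_mul_eq_mul_div]
        congr 1
        linear_combination b1 - 2 * b2
      rw [Finset.sum_congr rfl hper, ← Finset.sum_div]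
      congr 1
      have hsp : ∑ j ∈ Finset.range n, r ^ ((j:ℤ) - (n:ℤ) + 1) = r := by
        have hper2 : ∀ j ∈ Finset.range n, r ^ ((j:ℤ) - (n:ℤ) + 1)
            = r ^ ((1:ℤ) - (n:ℤ)) * r ^ j := by
          intro j hj
          rw [← zpow_natCast r j, ← zpow_add₀ hrne]
          congr 1
          ring
        rw [Finset.sum_congr rfl hper2, ← Finset.mul_sum, hs, ← zpow_natCast r n,
          ← zpow_add₀ hrne]
        rw [show (1:ℤ) - (n:ℤ) + (n:ℤ) = 1 by ring, zpow_one]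
      rw [Finset.sum_add_distrib, hsp, Finset.sum_const, Finset.card_range]
      push_cast
      ring
    have expand : ∑ j ∈ Finset.range n, cc j * E j
        = (∑ j ∈ Finset.range n, cc j * (F j : ℝ))
          - c * ∑ j ∈ Finset.range n, cc j * r ^ ((j:ℤ) - (n:ℤ) + 1) := by
      simp only [hE_def]
      rw [Finset.mul_sum, ← Finset.sum_sub_distrib]
      apply Finset.sum_congr rfl
      intro j hj
      ring
    rw [expand, hterm1, hterm2, hc_def]
    field_simp
    rw [div_self (by intro h; nlinarith), sub_self]
  -- the V invariant : inductive step and conclusion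
  have hV : ∀ l : ℕ, ∑ j ∈ Finset.range n, cc j * E (l + j) = 0 := by
    intro l
    induction l with
    | zero => simpa using hVbase
    | succ l ih =>
      have key : ∑ j ∈ Finset.range n, cc j * E (l + 1 + j)
          = r * (∑ j ∈ Finset.range n, cc j * E (l + j))
            + (E (l + n) - ∑ j ∈ Finset.range n, E (l + j)) := by
        rw [hsplit (fun j => cc j * E (l + 1 + j))]
        rw [show l + 1 + (n - 1) = l + n by omega, hccn1, one_mul]
        have hper : ∀ j ∈ Finset.range (n - 1), cc j * E (l + 1 + j)
            = r * (cc (j + 1) * E (l + (j + 1))) - E (l + (j + 1)) := by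
          intro j hj
          have hj' : j < n - 1 := Finset.mem_range.mp hj
          rw [hccrel j hj', show l + 1 + j = l + (j + 1) by omega]
          ring
        rw [Finset.sum_congr rfl hper, Finset.sum_sub_distrib, ← Finset.mul_sum]
        have h2 : ∑ j ∈ Finset.range (n - 1), cc (j + 1) * E (l + (j + 1))
            = (∑ j ∈ Finset.range n, cc j * E (l + j)) - cc 0 * E (l + 0) := by
          rw [hshift (fun j => cc j * E (l + j))]
          ring
        have h3 : ∑ j ∈ Finset.range (n - 1), E (l + (j + 1))
            = (∑ j ∈ Finset.range n, E (l + j)) - E (l + 0) := by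
          rw [hshift (fun j => E (l + j))]
          ring
        rw [h2, h3]
        have h4 : r * (cc 0 * E (l + 0)) = E (l + 0) := by rw [← mul_assoc, hccr0, one_mul]
        linear_combination -h4
      rw [key, ih, hErec l]
      ring
  -- the contraction identity
  have hEid : ∀ l : ℕ, E (l + n) = ∑ j ∈ Finset.range n, (1 - cc j) * E (l + j) := by
    intro l
    rw [hErec l]
    have h2 := hV l
    calc ∑ j ∈ Finset.range n, E (l + j)
        = ∑ j ∈ Finset.range n, E (l + j) - ∑ j ∈ Finset.range n, cc j * E (l + j) := by
          rw [h2]; ring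
    _ = ∑ j ∈ Finset.range n, (E (l + j) - cc j * E (l + j)) := (Finset.sum_sub_distrib _ _).symm
    _ = ∑ j ∈ Finset.range n, (1 - cc j) * E (l + j) := Finset.sum_congr rfl (fun j _ => by ring)
  -- main claim
  have main : ∀ k : ℕ, |E k| < 1 / 2 := by
    intro k
    induction k using Nat.strong_induction_on with
    | _ k ih =>
      rcases Nat.lt_or_ge k (n - 1) with hk | hk
      · -- small case : F k = 0
        have hFk : F k = 0 := hF0 k hk
        have hEk : E k = -(c * r ^ ((k:ℤ) - (n:ℤ) + 1)) := by
          rw [hE_def]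
          simp [hFk]
        rw [hEk, abs_neg, abs_of_pos (mul_pos hc_pos (zpow_pos hr0 _))]
        have he : (k:ℤ) - (n:ℤ) + 1 ≤ -1 := by omega
        have h1 : r ^ ((k:ℤ) - (n:ℤ) + 1) ≤ r ^ (-1 : ℤ) := zpow_le_zpow_right₀ hr1' he
        have h2 : c * r ^ ((k:ℤ) - (n:ℤ) + 1) ≤ c * r ^ (-1 : ℤ) :=
          mul_le_mul_of_nonneg_left h1 hc_pos.le
        have h3 : c * r ^ (-1 : ℤ) < 1 / 2 := by
          rw [zpow_neg, zpow_one, show c * r⁻¹ = c / r by rw [div_eq_mul_inv],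
            div_lt_iff₀ hr0]
          linarith [h2c]
        linarith
      · by_cases hk2 : k = n - 1
        · -- middle case : E k = 1 - c
          have hEk : E k = 1 - c := by
            rw [hE_def, hk2]
            simp only
            rw [hF1, show ((n - 1 : ℕ) : ℤ) - (n:ℤ) + 1 = 0 by omega, zpow_zero, mul_one]
            norm_num
          rw [hEk, abs_lt]
          constructor <;> linarith [hc_half, hc32]
        · -- recursive case
          obtain ⟨l, rfl⟩ : ∃ l, k = l + n := ⟨k - n, by omega⟩
          rw [hEid l]
          have hccge : ∀ j ∈ Finset.range n, (0:ℝ) ≤ 1 - cc j := by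
            intro j hj
            have := hccle j (Finset.mem_range.mp hj)
            linarith
          calc |∑ j ∈ Finset.range n, (1 - cc j) * E (l + j)|
              ≤ ∑ j ∈ Finset.range n, |(1 - cc j) * E (l + j)| :=
                Finset.abs_sum_le_sum_abs _ _
          _ = ∑ j ∈ Finset.range n, (1 - cc j) * |E (l + j)| := by
              apply Finset.sum_congr rfl
              intro j hj
              rw [abs_mul, abs_of_nonneg (hccge j hj)]
          _ ≤ ∑ j ∈ Finset.range n, (1 - cc j) * (1 / 2) := by
              apply Finset.sum_le_sum
              intro j hj
              exact mul_le_mul_of_nonneg_left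
                (le_of_lt (ih (l + j) (by have := Finset.mem_range.mp hj; omega)))
                (hccge j hj)
          _ = ((n:ℝ) - ∑ j ∈ Finset.range n, cc j) * (1 / 2) := by
              rw [← Finset.sum_mul, Finset.sum_sub_distrib, Finset.sum_const,
                Finset.card_range]
              simp
          _ < 1 / 2 := by
              rw [hScc]
              have h4 : ((n:ℝ) - 1) * (r - 1) < (n:ℝ) - 1 := by
                have := mul_lt_mul_of_pos_left (show r - 1 < 1 by linarith)
                  (show (0:ℝ) < (n:ℝ) - 1 by linarith)
                linarith [this]
              have h5 : ((n:ℝ) - 1) < ((n:ℝ) - 1) / (r - 1) := by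
                rw [lt_div_iff₀ hr1]
                exact h4
              linarith
  intro k
  have h := main k
  rw [hE_def] at h
  simpa using h
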